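/- Let 0 < P_fa < P_d < 1, α_1,…,α_k ∈ [0,1] with Σ_{j=1}^k α_j < 1/2, and arbitrary flipping probabilities P_{1,0}^j, P_{0,1}^j ∈ [0,1]. With β_{1,0} = Σ_{j=1}^k α_j P_{1,0}^j, β_{0,1} = Σ_{j=1}^k α_j P_{0,1}^j, π_{1,0} = β_{1,0}(1−P_fa) + (1−β_{0,1})P_fa and π_{1,1} = β_{1,0}(1−P_d) + (1−β_{0,1})P_d, one has π_{1,1} > π_{1,0}, and consequently the Bernoulli Kullback–Leibler divergence D_k = π_{1,0} log(π_{1,0}/π_{1,1}) + (1−π_{1,0}) log((1−π_{1,0})/(1−π_{1,1})) is strictly positive; no choice of flipping probabilities can make D_k = 0. -/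

import Mathlib

open Finset

/-- If `∑ αⱼ < 1/2`, then `π₁₁ > π₁₀` and the Bernoulli KL divergence `D_k` is strictly
positive: no choice of flipping probabilities can make `D_k = 0`. -/
theorem stmt_1 (k : ℕ) (α P10 P01 : ℕ → ℝ) (Pfa Pd : ℝ)
    (hPfa : 0 < Pfa) (hPfaPd : Pfa < Pd) (hPd : Pd < 1)
    (hα : ∀ j < k, α j ∈ Set.Icc (0 : ℝ) 1)
    (hαsum : ∑ j ∈ range k, α j < 1 / 2)
    (hP10 : ∀ j < k, P10 j ∈ Set.Icc (0 : ℝ) 1)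
    (hP01 : ∀ j < k, P01 j ∈ Set.Icc (0 : ℝ) 1)
    (β10 β01 π10 π11 Dk : ℝ)
    (hβ10 : β10 = ∑ j ∈ range k, α j * P10 j)
    (hβ01 : β01 = ∑ j ∈ range k, α j * P01 j)
    (hπ10 : π10 = β10 * (1 - Pfa) + (1 - β01) * Pfa)
    (hπ11 : π11 = β10 * (1 - Pd) + (1 - β01) * Pd)
    (hDk : Dk = π10 * Real.log (π10 / π11) +
      (1 - π10) * Real.log ((1 - π10) / (1 - π11))) :
    π10 < π11 ∧ 0 < Dk := by
  have hβ10_nonneg : 0 ≤ β10 := by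
    rw [hβ10]
    exact Finset.sum_nonneg fun j hj =>
      mul_nonneg (hα j (mem_range.1 hj)).1 (hP10 j (mem_range.1 hj)).1
  have hβ01_nonneg : 0 ≤ β01 := by
    rw [hβ01]
    exact Finset.sum_nonneg fun j hj =>
      mul_nonneg (hα j (mem_range.1 hj)).1 (hP01 j (mem_range.1 hj)).1
  have hβ10_le : β10 ≤ ∑ j ∈ range k, α j := by
    rw [hβ10]
    exact Finset.sum_le_sum fun j hj =>
      mul_le_of_le_one_right (hα j (mem_range.1 hj)).1 (hP10 j (mem_range.1 hj)).2
  have hβ01_le : β01 ≤ ∑ j ∈ range k, α j := by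
    rw [hβ01]
    exact Finset.sum_le_sum fun j hj =>
      mul_le_of_le_one_right (hα j (mem_range.1 hj)).1 (hP01 j (mem_range.1 hj)).2
  have hsum : β10 + β01 < 1 := by linarith
  have hlt : π10 < π11 := by
    rw [hπ10, hπ11]; nlinarith [mul_pos (sub_pos.2 hPfaPd) (by linarith : (0:ℝ) < 1 - β10 - β01)]
  have hp0 : 0 < π10 := by
    rw [hπ10]; nlinarith [mul_nonneg hβ10_nonneg (by linarith : (0:ℝ) ≤ 1 - Pfa),
      mul_pos (by linarith : (0:ℝ) < 1 - β01) hPfa]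
  have hq1 : π11 < 1 := by
    rw [hπ11]; nlinarith [mul_pos (by linarith : (0:ℝ) < 1 - β10) (by linarith : (0:ℝ) < 1 - Pd),
      mul_nonneg hβ01_nonneg (by linarith : (0:ℝ) ≤ Pd)]
  have hq0 : 0 < π11 := lt_trans hp0 hlt
  have hp1 : π10 < 1 := lt_trans hlt hq1
  refine ⟨hlt, ?_⟩
  have h1 : Real.log (π11 / π10) < π11 / π10 - 1 :=
    Real.log_lt_sub_one_of_pos (by positivity)
      (by rw [ne_eq, div_eq_one_iff_eq hp0.ne']; exact hlt.ne')
  have h2 : Real.log ((1 - π11) / (1 - π10)) < (1 - π11) / (1 - π10) - 1 :=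
    Real.log_lt_sub_one_of_pos (div_pos (by linarith) (by linarith))
      (by rw [ne_eq, div_eq_one_iff_eq (by linarith : (1:ℝ) - π10 ≠ 0)]; intro h; linarith)
  have e1 : Real.log (π10 / π11) = - Real.log (π11 / π10) := by
    rw [← Real.log_inv, inv_div]
  have e2 : Real.log ((1 - π10) / (1 - π11)) = - Real.log ((1 - π11) / (1 - π10)) := by
    rw [← Real.log_inv, inv_div]
  have f1 : π10 * (π11 / π10 - 1) = π11 - π10 := by field_simp
  have h10 : (1:ℝ) - π10 ≠ 0 := by linarith
  have f2 : (1 - π10) * ((1 - π11) / (1 - π10) - 1) = π10 - π11 := by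
    field_simp
    ring
  rw [hDk, e1, e2]
  nlinarith [mul_lt_mul_of_pos_left h1 hp0,
    mul_lt_mul_of_pos_left h2 (by linarith : (0:ℝ) < 1 - π10)]
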